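/- Let G be a connected graph with an interval colouring c, and suppose there is an edge e = vw such that e is the unique edge of G receiving the colour c₀ = c(e), and c₀ is neither the minimum nor the maximum colour used by c. Then the vertex set of G can be partitioned as V(G) = V₁ ∪ {v,w} ∪ V₂ such that every edge of G incident to a vertex of V₁ has colour strictly less than c₀ and every edge of G incident to a vertex of V₂ has colour strictly greater than c₀. In particular, there are no edges between V₁ and V₂, and the restrictions of c to the induced subgraphs G[V₁ ∪ {v,w}] and G[V₂ ∪ {v,w}] are interval colourings of those subgraphs. -/
import Mathlib


open SimpleGraph

/-- `c` is an interval colouring of `G`: a proper edge colouring such that the set of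
colours of edges incident to any vertex is an interval of integers. -/
def IsIntervalColoring {V : Type*} (G : SimpleGraph V) (c : Sym2 V → ℤ) : Prop :=
  (∀ v : V, ∀ e ∈ G.incidenceSet v, ∀ f ∈ G.incidenceSet v, e ≠ f → c e ≠ c f) ∧
  (∀ v : V, ∀ x : ℤ, (∃ e ∈ G.incidenceSet v, c e ≤ x) →
    (∃ e ∈ G.incidenceSet v, x ≤ c e) → ∃ e ∈ G.incidenceSet v, c e = x)

/-- `G` admits an interval colouring. -/
def IntervalColorable {V : Type*} (G : SimpleGraph V) : Prop :=
  ∃ c : Sym2 V → ℤ, IsIntervalColoring G c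

/-- The edge set of `G` can be partitioned into `k` parts, each spanning an
interval colourable subgraph of `G`. -/
def HasIntervalDecomposition {V : Type*} (G : SimpleGraph V) (k : ℕ) : Prop :=
  ∃ f : Sym2 V → Fin k, ∀ i : Fin k,
    IntervalColorable (SimpleGraph.fromEdgeSet {e | e ∈ G.edgeSet ∧ f e = i})

/-- The interval thickness of `G`: the smallest `k` such that the edge set of `G` can be
partitioned into `k` parts, each spanning an interval colourable subgraph. -/
noncomputable def intervalThickness {V : Type*} (G : SimpleGraph V) : ℕ :=
  sInf {k | HasIntervalDecomposition G k}

lemma incidence_exists' {V : Type*} {G : SimpleGraph V} {a : V} {e : Sym2 V}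
    (he : e ∈ G.incidenceSet a) : ∃ b, G.Adj a b ∧ e = s(a, b) := by
  induction e using Sym2.ind with
  | _ x y =>
    rcases Sym2.mem_iff.mp he.2 with rfl | rfl
    · exact ⟨y, he.1, rfl⟩
    · exact ⟨x, he.1.symm, Sym2.eq_swap.symm⟩

lemma induce_inc {V : Type*} {G : SimpleGraph V} {S : Set V} {a : S} {e : Sym2 S}
    (he : e ∈ (G.induce S).incidenceSet a) :
    ∃ b : S, G.Adj a.val b.val ∧ e = s(a, b) ∧
      e.map Subtype.val ∈ G.incidenceSet a.val ∧ e.map Subtype.val = s(a.val, b.val) := by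
  obtain ⟨b, hab, rfl⟩ := incidence_exists' he
  have hab' : G.Adj a.val b.val := hab
  exact ⟨b, hab', rfl, by
    rw [Sym2.map_pair_eq]
    exact G.mk'_mem_incidenceSet_left_iff.mpr hab', by rw [Sym2.map_pair_eq]⟩

lemma neg_ic {V : Type*} {G : SimpleGraph V} {c : Sym2 V → ℤ}
    (h : IsIntervalColoring G c) : IsIntervalColoring G (fun e => -(c e)) := by
  obtain ⟨h1, h2⟩ := h
  refine ⟨fun v e he f hf hne heq => h1 v e he f hf hne (by simpa using heq), ?_⟩
  intro v x ⟨e₁, he₁, hle₁⟩ ⟨e₂, he₂, hle₂⟩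
  simp only at hle₁ hle₂
  obtain ⟨e, he, hce⟩ := h2 v (-x) ⟨e₂, he₂, by linarith⟩ ⟨e₁, he₁, by linarith⟩
  exact ⟨e, he, by simp only; rw [hce]; ring⟩

lemma aux_ic {V : Type*} (G : SimpleGraph V) (c : Sym2 V → ℤ)
    (hc : IsIntervalColoring G c) (S : Set V) (c₀ : ℤ)
    (hub : ∀ x ∈ S, ∀ y ∈ S, G.Adj x y → c s(x, y) ≤ c₀)
    (hlift : ∀ x ∈ S, ∀ y, G.Adj x y → c s(x, y) ≤ c₀ → y ∈ S) :
    IsIntervalColoring (G.induce S) (fun e => c (e.map Subtype.val)) := by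
  constructor
  · intro a e he f hf hne
    obtain ⟨b, hab, rfl, hem, -⟩ := induce_inc he
    obtain ⟨b', hab', rfl, hfm, -⟩ := induce_inc hf
    exact hc.1 a.val _ hem _ hfm
      (fun h => hne (Sym2.map.injective Subtype.val_injective h))
  · rintro a t ⟨e₁, he₁, h1⟩ ⟨e₂, he₂, h2⟩
    obtain ⟨b₁, hab₁, rfl, hem₁, hval₁⟩ := induce_inc he₁
    obtain ⟨b₂, hab₂, rfl, hem₂, hval₂⟩ := induce_inc he₂
    have htc₀ : t ≤ c₀ := by
      have := hub a.val a.2 b₂.val b₂.2 hab₂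
      simp only at h2
      rw [hval₂] at h2
      linarith
    obtain ⟨e, he, hce⟩ := hc.2 a.val t ⟨_, hem₁, h1⟩ ⟨_, hem₂, h2⟩
    obtain ⟨y, hay, rfl⟩ := incidence_exists' he
    have hyS : y ∈ S := hlift a.val a.2 y hay (by rw [hce]; exact htc₀)
    refine ⟨s(a, ⟨y, hyS⟩), (G.induce S).mk'_mem_incidenceSet_left_iff.mpr hay, ?_⟩
    simpa using hce

/-- If a connected interval coloured graph has an edge `vw` whose colour `c₀` is unique
and is neither minimal nor maximal, then the vertices split as `V₁ ∪ {v, w} ∪ V₂`, where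
all edges at `V₁` have colour `< c₀` and all edges at `V₂` have colour `> c₀`; in
particular there are no edges between `V₁` and `V₂` and the restrictions of the colouring
to `G[V₁ ∪ {v, w}]` and `G[V₂ ∪ {v, w}]` are interval colourings. -/
theorem stmt_13 {V : Type*} (G : SimpleGraph V) (hconn : G.Connected)
    (c : Sym2 V → ℤ) (hc : IsIntervalColoring G c)
    (v w : V) (hvw : G.Adj v w) (c₀ : ℤ) (hc₀ : c s(v, w) = c₀)
    (huniq : ∀ e ∈ G.edgeSet, c e = c₀ → e = s(v, w))
    (hnotmin : ∃ e ∈ G.edgeSet, c e < c₀)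
    (hnotmax : ∃ e ∈ G.edgeSet, c₀ < c e) :
    ∃ V₁ V₂ : Set V,
      V₁ ∪ {v, w} ∪ V₂ = Set.univ ∧
      Disjoint V₁ V₂ ∧ Disjoint V₁ {v, w} ∧ Disjoint V₂ {v, w} ∧
      (∀ x ∈ V₁, ∀ e ∈ G.incidenceSet x, c e < c₀) ∧
      (∀ x ∈ V₂, ∀ e ∈ G.incidenceSet x, c₀ < c e) ∧
      (∀ x ∈ V₁, ∀ y ∈ V₂, ¬ G.Adj x y) ∧
      IsIntervalColoring (G.induce (V₁ ∪ {v, w}))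
        (fun e => c (e.map Subtype.val)) ∧
      IsIntervalColoring (G.induce (V₂ ∪ {v, w}))
        (fun e => c (e.map Subtype.val)) := by
  classical
  have hdeg : ∀ x : V, x ≠ v → ∃ y, G.Adj x y := by
    intro x hx
    obtain ⟨p⟩ := hconn x v
    cases p with
    | nil => exact absurd rfl hx
    | cons h _ => exact ⟨_, h⟩
  have hno : ∀ x, x ≠ v → x ≠ w → ∀ e ∈ G.incidenceSet x, c e ≠ c₀ := by
    intro x hxv hxw e he heq
    have h := huniq e he.1 heq
    subst h
    rcases Sym2.mem_iff.mp he.2 with h | h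
    · exact hxv h
    · exact hxw h
  set V₁ : Set V := {x | x ≠ v ∧ x ≠ w ∧ ∀ e ∈ G.incidenceSet x, c e < c₀} with hV₁def
  set V₂ : Set V := {x | x ≠ v ∧ x ≠ w ∧ ∀ e ∈ G.incidenceSet x, c₀ < c e} with hV₂def
  have hcover : ∀ x, x ≠ v → x ≠ w → x ∈ V₁ ∨ x ∈ V₂ := by
    intro x hxv hxw
    by_contra hcon
    push_neg at hcon
    obtain ⟨h1, h2⟩ := hcon
    simp only [hV₁def, hV₂def, Set.mem_setOf_eq, not_and, not_forall] at h1 h2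
    obtain ⟨e₁, he₁, hle₁⟩ := h1 hxv hxw
    obtain ⟨e₂, he₂, hle₂⟩ := h2 hxv hxw
    obtain ⟨e, he, hce⟩ := hc.2 x c₀ ⟨e₂, he₂, by omega⟩ ⟨e₁, he₁, by omega⟩
    exact hno x hxv hxw e he hce
  have hV₁ : ∀ x ∈ V₁, ∀ e ∈ G.incidenceSet x, c e < c₀ := fun x hx => hx.2.2
  have hV₂ : ∀ x ∈ V₂, ∀ e ∈ G.incidenceSet x, c₀ < c e := fun x hx => hx.2.2
  have hnoadj : ∀ x ∈ V₁, ∀ y ∈ V₂, ¬ G.Adj x y := by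
    intro x hx y hy hadj
    have h1 := hV₁ x hx _ (G.mk'_mem_incidenceSet_left_iff.mpr hadj)
    have h2 := hV₂ y hy _ (G.mk'_mem_incidenceSet_right_iff.mpr hadj)
    omega
  refine ⟨V₁, V₂, ?_, ?_, ?_, ?_, hV₁, hV₂, hnoadj, ?_, ?_⟩
  · ext x
    simp only [Set.mem_union, Set.mem_insert_iff, Set.mem_singleton_iff, Set.mem_univ,
      iff_true]
    by_cases hxv : x = v
    · exact Or.inl (Or.inr (Or.inl hxv))
    by_cases hxw : x = w
    · exact Or.inl (Or.inr (Or.inr hxw))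
    rcases hcover x hxv hxw with h | h
    · exact Or.inl (Or.inl h)
    · exact Or.inr h
  · rw [Set.disjoint_left]
    intro x hx hx2
    obtain ⟨y, hy⟩ := hdeg x hx.1
    have h1 := hV₁ x hx _ (G.mk'_mem_incidenceSet_left_iff.mpr hy)
    have h2 := hV₂ x hx2 _ (G.mk'_mem_incidenceSet_left_iff.mpr hy)
    omega
  · rw [Set.disjoint_left]
    rintro x hx (rfl | rfl)
    · exact hx.1 rfl
    · exact hx.2.1 rfl
  · rw [Set.disjoint_left]
    rintro x hx (rfl | rfl)
    · exact hx.1 rfl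
    · exact hx.2.1 rfl
  · refine aux_ic G c hc (V₁ ∪ {v, w}) c₀ ?_ ?_
    · rintro x hx y hy hadj
      rcases hx with hx | hx
      · exact (hV₁ x hx _ (G.mk'_mem_incidenceSet_left_iff.mpr hadj)).le
      rcases hy with hy | hy
      · exact (hV₁ y hy _ (G.mk'_mem_incidenceSet_right_iff.mpr hadj)).le
      · rcases hx with rfl | rfl <;> rcases hy with rfl | rfl
        · exact absurd rfl hadj.ne
        · exact le_of_eq hc₀
        · rw [Sym2.eq_swap]; exact le_of_eq hc₀
        · exact absurd rfl hadj.ne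
    · rintro x hx y hadj hle
      by_cases hyv : y = v
      · exact Or.inr (Or.inl hyv)
      by_cases hyw : y = w
      · exact Or.inr (Or.inr hyw)
      rcases hcover y hyv hyw with h | h
      · exact Or.inl h
      · exact absurd hle (not_le.mpr (hV₂ y h _ (G.mk'_mem_incidenceSet_right_iff.mpr hadj)))
  · have h := aux_ic G (fun e => -(c e)) (neg_ic hc) (V₂ ∪ {v, w}) (-c₀) ?_ ?_
    · have h2 := neg_ic h
      have heq : (fun e : Sym2 (V₂ ∪ {v, w} : Set V) =>
          -((fun e : Sym2 V => -(c e)) (e.map Subtype.val))) =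
          fun e => c (e.map Subtype.val) := by
        funext e; simp
      rwa [heq] at h2
    · rintro x hx y hy hadj
      simp only [neg_le_neg_iff]
      rcases hx with hx | hx
      · exact (hV₂ x hx _ (G.mk'_mem_incidenceSet_left_iff.mpr hadj)).le
      rcases hy with hy | hy
      · exact (hV₂ y hy _ (G.mk'_mem_incidenceSet_right_iff.mpr hadj)).le
      · rcases hx with rfl | rfl <;> rcases hy with rfl | rfl
        · exact absurd rfl hadj.ne
        · exact ge_of_eq hc₀
        · rw [Sym2.eq_swap]; exact ge_of_eq hc₀
        · exact absurd rfl hadj.ne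
    · rintro x hx y hadj hle
      simp only [neg_le_neg_iff] at hle
      by_cases hyv : y = v
      · exact Or.inr (Or.inl hyv)
      by_cases hyw : y = w
      · exact Or.inr (Or.inr hyw)
      rcases hcover y hyv hyw with h | h
      · exact absurd hle (not_le.mpr (hV₁ y h _ (G.mk'_mem_incidenceSet_right_iff.mpr hadj)))
      · exact Or.inl h
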